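/- Suppose P = {f_1, …, f_n} (n ≥ 2, f_i continuous) is a 2-overlapping Ruspini partition in which each f_i is strongly normal and min-convex, and let t_i be the unique point with f_i(t_i) = 1, indexed so that t_1 < t_2 < ⋯ < t_n. Then t_1 = 0 and t_n = 1. -/

import Mathlib

/-- For a 2-overlapping Ruspini partition of continuous fuzzy sets, each strongly
normal with (unique) peak `t i` and min-convex, with `t` strictly increasing,
the first peak is `0` and the last is `1`. -/
theorem stmt8 (n : ℕ) (hn : 2 ≤ n) (f : Fin n → ℝ → ℝ)
    (hcont : ∀ i, ContinuousOn (f i) (Set.Icc 0 1))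
    (hmap : ∀ i, Set.MapsTo (f i) (Set.Icc 0 1) (Set.Icc 0 1))
    (hruspini : ∀ x ∈ Set.Icc (0:ℝ) 1, ∑ i : Fin n, f i x = 1)
    (hoverlap : ∀ x ∈ Set.Icc (0:ℝ) 1, ∀ i₁ i₂ i₃ : Fin n,
      i₁ ≠ i₂ → i₁ ≠ i₃ → i₂ ≠ i₃ →
      min (f i₁ x) (min (f i₂ x) (f i₃ x)) = 0)
    (t : Fin n → ℝ)
    (htmem : ∀ i, t i ∈ Set.Icc (0:ℝ) 1)
    (hpeak : ∀ i, f i (t i) = 1)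
    (huniq : ∀ i, ∀ y ∈ Set.Icc (0:ℝ) 1, f i y = 1 → y = t i)
    (hconv : ∀ i, ∀ x ∈ Set.Icc (0:ℝ) 1, ∀ y ∈ Set.Icc (0:ℝ) 1,
      ∀ l ∈ Set.Icc (0:ℝ) 1, min (f i x) (f i y) ≤ f i (l * x + (1 - l) * y))
    (hmono : StrictMono t) :
    t ⟨0, by omega⟩ = 0 ∧ t ⟨n - 1, by omega⟩ = 1 := by
  have h01 : (0:ℝ) ∈ Set.Icc (0:ℝ) 1 := by norm_num
  have h11 : (1:ℝ) ∈ Set.Icc (0:ℝ) 1 := by norm_num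
  have hnonneg : ∀ i, ∀ x ∈ Set.Icc (0:ℝ) 1, 0 ≤ f i x := fun i x hx => (hmap i hx).1
  set i0 : Fin n := ⟨0, by omega⟩ with hi0
  set iN : Fin n := ⟨n - 1, by omega⟩ with hiN
  -- key: no other function can be positive at a peak
  have key : ∀ i j : Fin n, j ≠ i → 0 < f j (t i) → False := by
    intro i j hji hpos
    have hsum := hruspini (t i) (htmem i)
    have hle : f i (t i) + f j (t i) ≤ ∑ k, f k (t i) := by
      have h := Finset.sum_le_sum_of_subset_of_nonneg (Finset.subset_univ ({i, j} : Finset (Fin n)))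
        (fun k _ _ => hnonneg k (t i) (htmem i))
      rwa [Finset.sum_pair (Ne.symm hji)] at h
    rw [hsum, hpeak i] at hle
    linarith
  constructor
  · -- first peak is 0
    have hzero : ∀ j : Fin n, j ≠ i0 → f j 0 = 0 := by
      intro j hj
      by_contra h
      have hpos : 0 < f j 0 := lt_of_le_of_ne (hnonneg j 0 h01) (Ne.symm h)
      have hlt : t i0 < t j := hmono (by
        have : 0 < j.val := Nat.pos_of_ne_zero (fun hc => hj (Fin.ext hc))
        exact this)
      have htj : 0 < t j := lt_of_le_of_lt (htmem i0).1 hlt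
      have hl : (1 - t i0 / t j) ∈ Set.Icc (0:ℝ) 1 := by
        constructor
        · have : t i0 / t j ≤ 1 := by rw [div_le_one htj]; linarith
          linarith
        · have : 0 ≤ t i0 / t j := div_nonneg (htmem i0).1 htj.le
          linarith
      have hc := hconv j 0 h01 (t j) (htmem j) _ hl
      have heq : (1 - t i0 / t j) * 0 + (1 - (1 - t i0 / t j)) * t j = t i0 := by
        field_simp
        ring
      rw [heq, hpeak j] at hc
      exact key i0 j hj (lt_of_lt_of_le (lt_min hpos one_pos) hc)
    have hf0 : f i0 0 = 1 := by
      have hsum := hruspini 0 h01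
      rwa [Finset.sum_eq_single i0 (fun j _ hj => hzero j hj) (fun h => absurd (Finset.mem_univ i0) h)] at hsum
    exact (huniq i0 0 h01 hf0).symm
  · -- last peak is 1
    have hzero : ∀ j : Fin n, j ≠ iN → f j 1 = 0 := by
      intro j hj
      by_contra h
      have hpos : 0 < f j 1 := lt_of_le_of_ne (hnonneg j 1 h11) (Ne.symm h)
      have hlt : t j < t iN := hmono (by
        have h1 : j.val ≠ n - 1 := fun hc => hj (Fin.ext hc)
        have h2 : j.val < n := j.isLt
        show j.val < n - 1
        omega)
      have htj : t j < 1 := lt_of_lt_of_le hlt (htmem iN).2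
      have hden : 0 < 1 - t j := by linarith
      have hl : (t iN - t j) / (1 - t j) ∈ Set.Icc (0:ℝ) 1 := by
        constructor
        · exact div_nonneg (by linarith) hden.le
        · rw [div_le_one hden]
          have := (htmem iN).2
          linarith
      have hc := hconv j 1 h11 (t j) (htmem j) _ hl
      have heq : (t iN - t j) / (1 - t j) * 1 + (1 - (t iN - t j) / (1 - t j)) * t j = t iN := by
        field_simp
        ring
      rw [heq, hpeak j] at hc
      exact key iN j hj (lt_of_lt_of_le (lt_min hpos one_pos) hc)
    have hfN : f iN 1 = 1 := by
      have hsum := hruspini 1 h11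
      rwa [Finset.sum_eq_single iN (fun j _ hj => hzero j hj) (fun h => absurd (Finset.mem_univ iN) h)] at hsum
    exact (huniq iN 1 h11 hfN).symm
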